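/- Let $k \geq 1$, $\alpha > 0$, and $x_1,\dots,x_k \geq 0$. Then $\Phi_2^{(k)}\!\left[\tfrac{1}{k},\dots,\tfrac{1}{k};\alpha+1;\tfrac{x_1}{2},\dots,\tfrac{x_k}{2}\right] \leq {}_1F_1\!\left[1;\alpha+1;\tfrac{\|\mathbf{x}\|}{2}\right] \leq e^{\|\mathbf{x}\|/2}$, where $\|\mathbf{x}\| := \max_{1\leq j\leq k}|x_j|$. -/

import Mathlib

open scoped BigOperators
open MeasureTheory

/-- The rising factorial (Pochhammer symbol) `(a)_m = a (a+1) ⋯ (a+m-1)`. -/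
noncomputable def risingFactorial (a : ℝ) (m : ℕ) : ℝ := (ascPochhammer ℝ m).eval a

/-- The classical Laguerre polynomial `L_n^{(α)}(x)`. -/
noncomputable def laguerreP (n : ℕ) (α : ℝ) (x : ℝ) : ℝ :=
  risingFactorial (α + 1) n / (Nat.factorial n : ℝ) *
    ∑ j ∈ Finset.range (n + 1),
      risingFactorial (-(n : ℝ)) j / risingFactorial (α + 1) j * x ^ j / (Nat.factorial j : ℝ)

/-- Erdélyi's multivariate Laguerre polynomial `L_{n_1,…,n_k}^{(α)}(x_1,…,x_k)`. -/
noncomputable def mvLaguerre (k : ℕ) (α : ℝ) (n : Fin k → ℕ) (x : Fin k → ℝ) : ℝ :=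
  risingFactorial (α + 1) (∑ i, n i) / (∏ i, (Nat.factorial (n i) : ℝ)) *
    ∑ j ∈ Fintype.piFinset (fun i => Finset.range (n i + 1)),
      (∏ i, risingFactorial (-(n i : ℝ)) (j i)) / risingFactorial (α + 1) (∑ i, j i) *
        ∏ i, x i ^ (j i) / (Nat.factorial (j i) : ℝ)

/-- The confluent Lauricella function `Φ₂^{(k)}[b₁,…,b_k; c; x₁,…,x_k]`. -/
noncomputable def Phi2 (k : ℕ) (b : Fin k → ℝ) (c : ℝ) (x : Fin k → ℝ) : ℝ :=
  ∑' j : Fin k → ℕ,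
    (∏ i, risingFactorial (b i) (j i)) / risingFactorial c (∑ i, j i) *
      ∏ i, x i ^ (j i) / (Nat.factorial (j i) : ℝ)

/-- The confluent hypergeometric function `₁F₁[a; c; x]`. -/
noncomputable def oneF1 (a c x : ℝ) : ℝ :=
  ∑' j : ℕ, risingFactorial a j / risingFactorial c j * x ^ j / (Nat.factorial j : ℝ)

/-- Rooney's constant `q_n = √((2n)!) / (2^{n+1/2} n!)`. -/
noncomputable def qSeq (n : ℕ) : ℝ :=
  Real.sqrt (Nat.factorial (2 * n) : ℝ) /
    ((2 : ℝ) ^ ((n : ℝ) + 1 / 2) * (Nat.factorial n : ℝ))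

/-- The open standard simplex `E_k ⊆ ℝ^k`. -/
def simplexE (k : ℕ) : Set (Fin k → ℝ) := {u | (∀ i, 0 < u i) ∧ ∑ i, u i < 1}

/-- The density of the Dirichlet measure `μ_{(b₁,…,b_k,β)}` with respect to
Lebesgue measure on the simplex `E_k`. -/
noncomputable def dirichletDensity (k : ℕ) (b : Fin k → ℝ) (β : ℝ) (u : Fin k → ℝ) : ℝ :=
  Real.Gamma (∑ i, b i + β) / ((∏ i, Real.Gamma (b i)) * Real.Gamma β) *
    (∏ i, u i ^ (b i - 1)) * (1 - ∑ i, u i) ^ (β - 1)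

lemma rf_zero (a : ℝ) : risingFactorial a 0 = 1 := by simp [risingFactorial]

lemma rf_succ (a : ℝ) (n : ℕ) : risingFactorial a (n+1) = risingFactorial a n * (a + n) := by
  simp [risingFactorial, ascPochhammer_succ_eval]

lemma rf_nonneg {a : ℝ} (ha : 0 ≤ a) (n : ℕ) : 0 ≤ risingFactorial a n := by
  induction n with
  | zero => simp [rf_zero]
  | succ n ih => rw [rf_succ]; exact mul_nonneg ih (by positivity)

lemma rf_one (n : ℕ) : risingFactorial 1 n = n.factorial := by
  induction n with
  | zero => simp [rf_zero]
  | succ n ih => rw [rf_succ, ih, Nat.factorial_succ]; push_cast; ring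

lemma rf_pos {a : ℝ} (ha : 0 < a) (n : ℕ) : 0 < risingFactorial a n := by
  induction n with
  | zero => simp [rf_zero]
  | succ n ih => rw [rf_succ]; exact mul_pos ih (by positivity)

lemma rf_factorial_le {a : ℝ} (ha : 1 ≤ a) (n : ℕ) : (n.factorial : ℝ) ≤ risingFactorial a n := by
  induction n with
  | zero => simp [rf_zero]
  | succ n ih =>
    rw [rf_succ, Nat.factorial_succ]
    push_cast
    have h1 : (0:ℝ) < n.factorial := by positivity
    have : (1:ℝ) + n ≤ a + n := by linarith
    calc ((n:ℝ)+1) * n.factorial = n.factorial * (1 + n) := by ring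
    _ ≤ risingFactorial a n * (a + n) := by
        apply mul_le_mul ih this (by positivity) (le_trans h1.le ih)

lemma vand2 (a b : ℝ) (n : ℕ) :
    ∑ m ∈ Finset.range (n+1),
      (n.choose m : ℝ) * risingFactorial a m * risingFactorial b (n - m)
      = risingFactorial (a + b) n := by
  induction n with
  | zero => simp [rf_zero]
  | succ n ih =>
    rw [Finset.sum_range_succ']
    have key : ∀ m ∈ Finset.range (n+1),
        ((n+1).choose (m+1) : ℝ) * risingFactorial a (m+1) * risingFactorial b (n + 1 - (m+1))
        = (n.choose m : ℝ) * (risingFactorial a m * (a + m)) * risingFactorial b (n - m)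
          + (n.choose (m+1) : ℝ) * risingFactorial a (m+1) * risingFactorial b (n - m) := by
      intro m hm
      have e : n + 1 - (m+1) = n - m := by omega
      rw [Nat.choose_succ_succ, e]
      push_cast
      rw [rf_succ]
      ring
    rw [Finset.sum_congr rfl key, Finset.sum_add_distrib, add_assoc]
    have h3 := Finset.sum_range_succ'
      (fun m => (n.choose m : ℝ) * risingFactorial a m * risingFactorial b (n + 1 - m)) (n+1)
    simp only [Nat.succ_sub_succ, Nat.sub_zero, Nat.choose_zero_right, Nat.cast_one, one_mul,
      rf_zero] at h3
    rw [Finset.sum_range_succ] at h3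
    simp only [Nat.choose_succ_self, Nat.cast_zero, zero_mul, add_zero] at h3
    simp only [Nat.choose_zero_right, Nat.cast_one, one_mul, rf_zero, Nat.sub_zero]
    rw [← h3, rf_succ, ← ih, Finset.sum_mul, ← Finset.sum_add_distrib]
    apply Finset.sum_congr rfl
    intro m hm
    have hm' : m ≤ n := by
      simpa [Nat.lt_succ_iff] using hm
    have e1 : n + 1 - m = (n - m) + 1 := by omega
    have e2 : ((n - m : ℕ) : ℝ) = (n : ℝ) - m := by
      push_cast [hm']
      ring
    rw [e1, rf_succ, e2]
    push_cast
    ring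

lemma vand2' (a b : ℝ) (n : ℕ) :
    ∑ m ∈ Finset.range (n+1),
      (risingFactorial a m / m.factorial) * (risingFactorial b (n-m) / (n-m).factorial)
      = risingFactorial (a + b) n / n.factorial := by
  rw [← vand2, Finset.sum_div]
  apply Finset.sum_congr rfl
  intro m hm
  have hm' : m ≤ n := by simpa [Nat.lt_succ_iff] using hm
  have hc : ((n.choose m : ℕ) : ℝ) * m.factorial * (n-m).factorial = n.factorial := by
    exact_mod_cast congrArg Nat.cast (Nat.choose_mul_factorial_mul_factorial hm')
  have h1 : (m.factorial : ℝ) ≠ 0 := by positivity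
  have h2 : ((n-m).factorial : ℝ) ≠ 0 := by positivity
  have h3 : (n.factorial : ℝ) ≠ 0 := by positivity
  field_simp
  linear_combination (-(risingFactorial a m * risingFactorial b (n-m))) * hc

lemma sum_antidiagonalTuple_succ {M : Type*} [AddCommMonoid M] (k n : ℕ)
    (f : (Fin (k+1) → ℕ) → M) :
    ∑ j ∈ Finset.Nat.antidiagonalTuple (k+1) n, f j
      = ∑ m ∈ Finset.range (n+1),
          ∑ j ∈ Finset.Nat.antidiagonalTuple k (n - m), f (Fin.cons m j) := by
  rw [Finset.sum_sigma']
  apply Finset.sum_nbij' (i := fun j => (⟨j 0, Fin.tail j⟩ : Σ _ : ℕ, (Fin k → ℕ)))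
    (j := fun p => Fin.cons p.1 p.2)
  · intro j hj
    rw [Finset.Nat.mem_antidiagonalTuple] at hj
    rw [Fin.sum_univ_succ] at hj
    simp only [Finset.mem_sigma, Finset.mem_range, Finset.Nat.mem_antidiagonalTuple]
    constructor
    · omega
    · simp only [Fin.tail]
      omega
  · intro p hp
    simp only [Finset.mem_sigma, Finset.mem_range, Finset.Nat.mem_antidiagonalTuple] at hp
    rw [Finset.Nat.mem_antidiagonalTuple, Fin.sum_univ_succ]
    simp only [Fin.cons_zero, Fin.cons_succ]
    omega
  · intro j hj
    exact Fin.cons_self_tail j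
  · intro p hp
    ext
    · simp
    · simp [Fin.tail_cons]
  · intro j hj
    rw [Fin.cons_self_tail]

lemma vandk : ∀ (k : ℕ) (b : Fin k → ℝ) (n : ℕ),
    ∑ j ∈ Finset.Nat.antidiagonalTuple k n,
      ∏ i, (risingFactorial (b i) (j i) / (j i).factorial)
    = risingFactorial (∑ i, b i) n / n.factorial := by
  intro k
  induction k with
  | zero =>
    intro b n
    cases n with
    | zero => simp [rf_zero]
    | succ n =>
      simp only [Finset.univ_eq_empty, Finset.sum_empty]
      rw [show risingFactorial 0 (n+1) = 0 by
        simp [risingFactorial, ascPochhammer_eval_zero]]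
      simp [Finset.Nat.antidiagonalTuple]
  | succ k ih =>
    intro b n
    rw [sum_antidiagonalTuple_succ]
    have step : ∀ m ∈ Finset.range (n+1),
        ∑ j ∈ Finset.Nat.antidiagonalTuple k (n - m),
          ∏ i, (risingFactorial (b i) ((Fin.cons m j : Fin (k+1) → ℕ) i) /
            ((Fin.cons m j : Fin (k+1) → ℕ) i).factorial)
        = (risingFactorial (b 0) m / m.factorial) *
            (risingFactorial (∑ i : Fin k, b i.succ) (n - m) / (n - m).factorial) := by
      intro m hm
      rw [← ih (fun i => b i.succ) (n - m), Finset.mul_sum]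
      apply Finset.sum_congr rfl
      intro j hj
      rw [Fin.prod_univ_succ]
      simp [Fin.cons_zero, Fin.cons_succ]
    rw [Finset.sum_congr rfl step, vand2', Fin.sum_univ_succ]

/-- Inequality (2.8): the Lauricella function `Φ₂^{(k)}[1/k,…,1/k; α+1; x/2]` is bounded by
`₁F₁[1; α+1; ‖x‖/2] ≤ exp(‖x‖/2)`. -/
theorem Phi2_le_oneF1_le_exp (k : ℕ) (hk : 1 ≤ k) (α : ℝ) (hα : 0 < α)
    (x : Fin k → ℝ) (hx : ∀ i, 0 ≤ x i) :
    Phi2 k (fun _ => 1 / (k : ℝ)) (α + 1) (fun i => x i / 2) ≤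
        oneF1 1 (α + 1) ((⨆ i, |x i|) / 2) ∧
      oneF1 1 (α + 1) ((⨆ i, |x i|) / 2) ≤ Real.exp ((⨆ i, |x i|) / 2) := by
  set t := (⨆ i, |x i|) / 2 with ht_def
  have hbdd : BddAbove (Set.range fun i => |x i|) := Set.Finite.bddAbove (Set.finite_range _)
  have hxt : ∀ i, x i / 2 ≤ t := by
    intro i
    have h1 : x i ≤ |x i| := le_abs_self _
    have h2 : |x i| ≤ ⨆ i, |x i| := le_ciSup hbdd i
    rw [ht_def]
    linarith
  have ht : 0 ≤ t := by
    have i0 : Fin k := ⟨0, hk⟩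
    have := hxt i0
    have := hx i0
    linarith
  have hkR : (0:ℝ) < 1 / (k:ℝ) := by
    have : (0:ℝ) < (k:ℝ) := by exact_mod_cast hk
    positivity
  have hα1 : (1:ℝ) ≤ α + 1 := by linarith
  have hR : ∀ n, (0:ℝ) < risingFactorial (α+1) n := fun n => rf_pos (by linarith) n
  have hRf : ∀ n, (n.factorial:ℝ) ≤ risingFactorial (α+1) n := fun n => rf_factorial_le hα1 n
  have hg_eq : ∀ n : ℕ, risingFactorial 1 n / risingFactorial (α+1) n * t^n / n.factorial
      = t^n / risingFactorial (α+1) n := by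
    intro n
    rw [rf_one]
    have h1 : (n.factorial:ℝ) ≠ 0 := by positivity
    have h2 : risingFactorial (α+1) n ≠ 0 := (hR n).ne'
    field_simp
  have hg_nonneg : ∀ n : ℕ,
      0 ≤ risingFactorial 1 n / risingFactorial (α+1) n * t^n / n.factorial := by
    intro n
    rw [hg_eq]
    have := hR n
    positivity
  have hg_le : ∀ n : ℕ, risingFactorial 1 n / risingFactorial (α+1) n * t^n / n.factorial
      ≤ t^n / n.factorial := by
    intro n
    rw [hg_eq]
    exact div_le_div_of_nonneg_left (by positivity) (by positivity) (hRf n)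
  have hg_sum : Summable (fun n : ℕ =>
      risingFactorial 1 n / risingFactorial (α+1) n * t^n / n.factorial) :=
    Summable.of_nonneg_of_le hg_nonneg hg_le (Real.summable_pow_div_factorial t)
  constructor
  · -- Phi2 ≤ oneF1
    rw [oneF1]
    have hf_nonneg : ∀ j : Fin k → ℕ,
        0 ≤ (∏ i, risingFactorial (1/(k:ℝ)) (j i)) / risingFactorial (α+1) (∑ i, j i) *
          ∏ i, (x i / 2) ^ (j i) / ((j i).factorial : ℝ) := by
      intro j
      apply mul_nonneg
      · exact div_nonneg (Finset.prod_nonneg fun i _ => rf_nonneg hkR.le _) (hR _).le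
      · apply Finset.prod_nonneg
        intro i _
        have := hx i
        positivity
    have hPhi : Phi2 k (fun _ => 1/(k:ℝ)) (α+1) (fun i => x i / 2)
        = ∑' j : Fin k → ℕ,
            (∏ i, risingFactorial (1/(k:ℝ)) (j i)) / risingFactorial (α+1) (∑ i, j i) *
              ∏ i, (x i / 2) ^ (j i) / ((j i).factorial : ℝ) := rfl
    rw [hPhi]
    apply tsum_le_of_sum_le' (tsum_nonneg hg_nonneg)
    intro s
    set N := s.sup (fun j => ∑ i, j i) with hN
    have hsub : s ⊆ (Finset.range (N+1)).biUnion (Finset.Nat.antidiagonalTuple k) := by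
      intro j hj
      rw [Finset.mem_biUnion]
      exact ⟨∑ i, j i, Finset.mem_range.mpr (Nat.lt_succ_of_le (Finset.le_sup hj)),
        Finset.Nat.mem_antidiagonalTuple.mpr rfl⟩
    have hdisj : Set.PairwiseDisjoint ↑(Finset.range (N+1))
        (Finset.Nat.antidiagonalTuple k) := by
      intro n _ m _ hnm
      rw [Function.onFun, Finset.disjoint_left]
      intro j hj1 hj2
      exact hnm ((Finset.Nat.mem_antidiagonalTuple.mp hj1).symm.trans
        (Finset.Nat.mem_antidiagonalTuple.mp hj2))
    have key : ∀ n, ∑ j ∈ Finset.Nat.antidiagonalTuple k n,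
        ((∏ i, risingFactorial (1/(k:ℝ)) (j i)) / risingFactorial (α+1) (∑ i, j i) *
          ∏ i, (x i / 2) ^ (j i) / ((j i).factorial : ℝ))
        ≤ risingFactorial 1 n / risingFactorial (α+1) n * t^n / n.factorial := by
      intro n
      rw [hg_eq]
      have hb : ∀ j ∈ Finset.Nat.antidiagonalTuple k n,
          (∏ i, risingFactorial (1/(k:ℝ)) (j i)) / risingFactorial (α+1) (∑ i, j i) *
            ∏ i, (x i / 2) ^ (j i) / ((j i).factorial : ℝ)
          ≤ (∏ i, risingFactorial (1/(k:ℝ)) (j i) / ((j i).factorial : ℝ)) *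
              (t^n / risingFactorial (α+1) n) := by
        intro j hj
        have hjn : ∑ i, j i = n := Finset.Nat.mem_antidiagonalTuple.mp hj
        rw [hjn, Finset.prod_div_distrib, Finset.prod_div_distrib,
          div_mul_div_comm, div_mul_div_comm]
        rw [mul_comm (∏ i, ((j i).factorial : ℝ)) (risingFactorial (α+1) n)]
        have hprodR : 0 ≤ ∏ i, risingFactorial (1/(k:ℝ)) (j i) :=
          Finset.prod_nonneg fun i _ => rf_nonneg hkR.le _
        have hfactpos : 0 < ∏ i, ((j i).factorial : ℝ) :=
          Finset.prod_pos fun i _ => by positivity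
        have hP : ∏ i, (x i / 2) ^ (j i) ≤ t ^ n := by
          calc ∏ i, (x i / 2) ^ (j i) ≤ ∏ i, t ^ (j i) := by
                apply Finset.prod_le_prod
                · intro i _
                  have := hx i
                  positivity
                · intro i _
                  exact pow_le_pow_left₀ (div_nonneg (hx i) (by norm_num)) (hxt i) _
          _ = t ^ n := by rw [Finset.prod_pow_eq_pow_sum, hjn]
        exact div_le_div₀ (mul_nonneg hprodR (pow_nonneg ht n))
          (mul_le_mul_of_nonneg_left hP hprodR) (mul_pos (hR n) hfactpos) le_rfl
      calc ∑ j ∈ Finset.Nat.antidiagonalTuple k n,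
          ((∏ i, risingFactorial (1/(k:ℝ)) (j i)) / risingFactorial (α+1) (∑ i, j i) *
            ∏ i, (x i / 2) ^ (j i) / ((j i).factorial : ℝ))
          ≤ ∑ j ∈ Finset.Nat.antidiagonalTuple k n,
            (∏ i, risingFactorial (1/(k:ℝ)) (j i) / ((j i).factorial : ℝ)) *
              (t^n / risingFactorial (α+1) n) := Finset.sum_le_sum hb
      _ = (risingFactorial (∑ _i : Fin k, (1/(k:ℝ))) n / n.factorial) *
            (t^n / risingFactorial (α+1) n) := by rw [← Finset.sum_mul, vandk]
      _ = t^n / risingFactorial (α+1) n := by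
          have hsum1 : ∑ _i : Fin k, (1/(k:ℝ)) = 1 := by
            rw [Finset.sum_const, Finset.card_univ, Fintype.card_fin, nsmul_eq_mul]
            have : (k:ℝ) ≠ 0 := by positivity
            field_simp
          rw [hsum1, rf_one]
          have : (n.factorial:ℝ) ≠ 0 := by positivity
          rw [div_self this, one_mul]
    calc ∑ j ∈ s,
        ((∏ i, risingFactorial (1/(k:ℝ)) (j i)) / risingFactorial (α+1) (∑ i, j i) *
          ∏ i, (x i / 2) ^ (j i) / ((j i).factorial : ℝ))
        ≤ ∑ j ∈ (Finset.range (N+1)).biUnion (Finset.Nat.antidiagonalTuple k),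
          ((∏ i, risingFactorial (1/(k:ℝ)) (j i)) / risingFactorial (α+1) (∑ i, j i) *
            ∏ i, (x i / 2) ^ (j i) / ((j i).factorial : ℝ)) :=
        Finset.sum_le_sum_of_subset_of_nonneg hsub (fun j _ _ => hf_nonneg j)
    _ = ∑ n ∈ Finset.range (N+1), ∑ j ∈ Finset.Nat.antidiagonalTuple k n,
          ((∏ i, risingFactorial (1/(k:ℝ)) (j i)) / risingFactorial (α+1) (∑ i, j i) *
            ∏ i, (x i / 2) ^ (j i) / ((j i).factorial : ℝ)) := Finset.sum_biUnion hdisj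
    _ ≤ ∑ n ∈ Finset.range (N+1),
          risingFactorial 1 n / risingFactorial (α+1) n * t^n / n.factorial :=
        Finset.sum_le_sum (fun n _ => key n)
    _ ≤ ∑' n : ℕ, risingFactorial 1 n / risingFactorial (α+1) n * t^n / n.factorial :=
        Summable.sum_le_tsum _ (fun n _ => hg_nonneg n) hg_sum
  · rw [oneF1]
    have hexp : Real.exp t = ∑' n : ℕ, t^n / n.factorial := by
      rw [Real.exp_eq_exp_ℝ, NormedSpace.exp_eq_tsum_div]
    rw [hexp]
    exact Summable.tsum_le_tsum hg_le hg_sum (Real.summable_pow_div_factorial t)
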